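/- Let (X,d) be an ultrametric space with at least two points whose diametrical graph is empty. Then (X,d) is weakly similar to an unbounded ultrametric space: there exists an unbounded ultrametric space (Y,ρ) and a bijection Φ: X → Y with a strictly increasing bijection ψ: D(Y) → D(X) satisfying d(x,y) = ψ(ρ(Φ(x),Φ(y))) for all x,y ∈ X. -/

import Mathlib

universe u

/-- An ultrametric space with at least two points whose diametrical graph is empty
is weakly similar to an unbounded ultrametric space. -/
theorem stmt_19 {X : Type u} [MetricSpace X] [Nontrivial X]
    (hU : ∀ x y z : X, dist x y ≤ max (dist x z) (dist z y))
    (hemp : ∀ u v : X, u ≠ v →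
      dist u v ≠ sSup {r : ℝ | ∃ a b : X, dist a b = r}) :
    ∃ (Y : Type u) (ρ : Y → Y → ℝ) (Φ : X → Y) (ψ : ℝ → ℝ),
      (∀ a b : Y, 0 ≤ ρ a b) ∧
      (∀ a b : Y, ρ a b = 0 ↔ a = b) ∧
      (∀ a b : Y, ρ a b = ρ b a) ∧
      (∀ a b c : Y, ρ a b ≤ max (ρ a c) (ρ c b)) ∧
      (∀ C : ℝ, ∃ a b : Y, C < ρ a b) ∧
      Function.Bijective Φ ∧
      Set.BijOn ψ {r : ℝ | ∃ a b : Y, ρ a b = r} {r : ℝ | ∃ a b : X, dist a b = r} ∧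
      StrictMonoOn ψ {r : ℝ | ∃ a b : Y, ρ a b = r} ∧
      (∀ x y : X, dist x y = ψ (ρ (Φ x) (Φ y))) := by
  classical
  set D : Set ℝ := {r : ℝ | ∃ a b : X, dist a b = r} with hD
  by_cases hbdd : BddAbove D
  · -- bounded case
    set S : ℝ := sSup D with hS
    obtain ⟨u, v, huv⟩ := exists_pair_ne X
    have hmemuv : dist u v ∈ D := ⟨u, v, rfl⟩
    have hduv : dist u v ≤ S := le_csSup hbdd hmemuv
    have hduvlt : dist u v < S := lt_of_le_of_ne hduv (hemp u v huv)
    have hSpos : 0 < S := lt_of_le_of_lt dist_nonneg hduvlt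
    have hlt : ∀ x y : X, dist x y < S := by
      intro x y
      by_cases hxy : x = y
      · subst hxy; simpa using hSpos
      · exact lt_of_le_of_ne (le_csSup hbdd ⟨x, y, rfl⟩) (hemp x y hxy)
    -- the transform
    set f : ℝ → ℝ := fun t => t / (S - t) with hf
    set ψ : ℝ → ℝ := fun s => S * s / (1 + s) with hψ
    have hψf : ∀ t : ℝ, 0 ≤ t → t < S → ψ (f t) = t := by
      intro t ht0 htS
      have h1 : (0:ℝ) < S - t := by linarith
      have h2 : S - t ≠ 0 := ne_of_gt h1
      have h3 : (1:ℝ) + t / (S - t) = S / (S - t) := by field_simp; ring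
      simp only [hψ, hf, h3]
      have hS0 : S ≠ 0 := ne_of_gt hSpos
      field_simp
    have hfmono : ∀ a b : ℝ, 0 ≤ a → a ≤ b → b < S → f a ≤ f b := by
      intro a b ha hab hbS
      have h1 : (0:ℝ) < S - a := by linarith
      have h2 : (0:ℝ) < S - b := by linarith
      rw [hf]
      rw [div_le_div_iff₀ h1 h2]
      nlinarith
    have hfnonneg : ∀ t : ℝ, 0 ≤ t → t < S → 0 ≤ f t :=
      fun t ht hts => div_nonneg ht (by linarith)
    -- ψ strictly monotone on [0, ∞)
    have hψmono : ∀ a b : ℝ, 0 ≤ a → a < b → ψ a < ψ b := by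
      intro a b ha hab
      have h1 : (0:ℝ) < 1 + a := by linarith
      have h2 : (0:ℝ) < 1 + b := by linarith
      rw [hψ]
      rw [div_lt_div_iff₀ h1 h2]
      nlinarith
    refine ⟨X, fun x y => f (dist x y), id, ψ, ?_, ?_, ?_, ?_, ?_, Function.bijective_id,
      ?_, ?_, ?_⟩
    · intro a b; exact hfnonneg _ dist_nonneg (hlt a b)
    · intro a b
      have h2 : S - dist a b ≠ 0 := ne_of_gt (by linarith [hlt a b])
      rw [hf]
      simp only [div_eq_zero_iff, h2, or_false, dist_eq_zero]
    · intro a b; show f (dist a b) = f (dist b a); rw [dist_comm]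
    · intro a b c
      rcases le_total (dist a c) (dist c b) with h | h
      · have := hfmono (dist a b) (dist c b)
          dist_nonneg (le_trans (hU a b c) (by simp [h])) (hlt c b)
        exact le_trans this (le_max_right _ _)
      · have := hfmono (dist a b) (dist a c)
          dist_nonneg (le_trans (hU a b c) (by simp [h])) (hlt a c)
        exact le_trans this (le_max_left _ _)
    · -- unboundedness
      intro C
      set C' : ℝ := max C 0 with hC'
      have hC'0 : 0 ≤ C' := le_max_right _ _
      have h1 : (0:ℝ) < 1 + C' := by linarith
      have hlt' : S * C' / (1 + C') < S := by
        rw [div_lt_iff₀ h1]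
        nlinarith
      obtain ⟨r, hrD, hr⟩ := exists_lt_of_lt_csSup ⟨dist u v, hmemuv⟩ hlt'
      obtain ⟨a, b, hab⟩ := hrD
      refine ⟨a, b, ?_⟩
      have hrS : r < S := hab ▸ hlt a b
      have hr0 : 0 ≤ r := hab ▸ dist_nonneg
      have h2 : (0:ℝ) < S - r := by linarith
      have key : C' < r / (S - r) := by
        rw [lt_div_iff₀ h2]
        rw [div_lt_iff₀ h1] at hr
        nlinarith
      have : C ≤ C' := le_max_left _ _
      calc C ≤ C' := this
        _ < r / (S - r) := key
        _ = f (dist a b) := by rw [hf, hab]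
    · -- BijOn
      constructor
      · rintro s ⟨a, b, rfl⟩
        exact ⟨a, b, (hψf _ dist_nonneg (hlt a b)).symm ▸ hψf _ dist_nonneg (hlt a b)⟩
      constructor
      · rintro s ⟨a, b, rfl⟩ t ⟨c, d, rfl⟩ hst
        rw [hψf _ dist_nonneg (hlt a b), hψf _ dist_nonneg (hlt c d)] at hst
        show f (dist a b) = f (dist c d)
        rw [hst]
      · rintro t ⟨a, b, rfl⟩
        exact ⟨f (dist a b), ⟨a, b, rfl⟩, hψf _ dist_nonneg (hlt a b)⟩
    · -- StrictMonoOn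
      rintro s ⟨a, b, rfl⟩ t ⟨c, d, rfl⟩ hst
      exact hψmono _ _ (hfnonneg _ dist_nonneg (hlt a b)) hst
    · intro x y
      exact (hψf _ dist_nonneg (hlt x y)).symm
  · -- unbounded case: identity works
    refine ⟨X, dist, id, id, fun a b => dist_nonneg, fun a b => dist_eq_zero,
      fun a b => dist_comm a b, hU, ?_, Function.bijective_id, ?_, ?_, fun x y => rfl⟩
    · intro C
      rw [not_bddAbove_iff] at hbdd
      obtain ⟨r, ⟨a, b, rfl⟩, hr⟩ := hbdd C
      exact ⟨a, b, hr⟩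
    · exact Set.bijOn_id _
    · exact strictMonoOn_id
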